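/- arXiv:1109.6844 — 3 statements merged into one kernel-verified Lean document; each statement's English description precedes it below -/
import Mathlib

section
/- Let m > 0 and let ĝ = (ĝ_{ij}) (i,j = 1,…,4) be a real symmetric 4×4 matrix whose spatial block (ĝ_{AB}) (A,B = 2,3,4) is uniformly positive definite, i.e. there exists a > 0 such that ĝ_{AB} ξ^A ξ^B ≥ a² |ξ|² for all ξ ∈ ℝ³. Then the image of the mass shell F = { q = (q¹,q²,q³,q⁴) ∈ ℝ⁴ : ĝ_{ij} q^i q^j = −m², q¹ > 0 } under the map q ↦ (q²/q¹, q³/q¹, q⁴/q¹) is a bounded subset of ℝ³. -/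
open scoped BigOperators

set_option maxHeartbeats 1000000 in
/-- Proposition 1(ii): under uniform positivity of the spatial block of the metric,
the image of the mass shell under `q ↦ (q²/q¹, q³/q¹, q⁴/q¹)` is bounded in ℝ³.
Indices: `0,1,2,3` in `Fin 4` correspond to `1,2,3,4`; `Fin.succ` embeds the
spatial indices `2,3,4`. -/
theorem mass_shell_image_bounded (m : ℝ) (hm : 0 < m)
    (g : Matrix (Fin 4) (Fin 4) ℝ) (hsym : g.IsSymm)
    (hpos : ∃ a : ℝ, 0 < a ∧ ∀ ξ : Fin 3 → ℝ,
      a ^ 2 * (∑ A, (ξ A) ^ 2) ≤ ∑ A, ∑ B, g A.succ B.succ * ξ A * ξ B) :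
    Bornology.IsBounded
      ((fun q : Fin 4 → ℝ => fun A : Fin 3 => q A.succ / q 0) ''
        {q : Fin 4 → ℝ | (∑ i, ∑ j, g i j * q i * q j) = -m ^ 2 ∧ 0 < q 0}) := by
  obtain ⟨a, ha, hg⟩ := hpos
  have ha2 : (0:ℝ) < a ^ 2 := by positivity
  obtain ⟨K, hKdef⟩ : ∃ K : ℝ, K = |g 0 0| * a ^ 2 + 2 *
      ((g 0 1)^2 + (g 1 0)^2 + (g 0 2)^2 + (g 2 0)^2 + (g 0 3)^2 + (g 3 0)^2) := ⟨_, rfl⟩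
  have hK0 : 0 ≤ K := by rw [hKdef]; positivity
  obtain ⟨R, hRdef⟩ : ∃ R : ℝ, R = Real.sqrt (4 * K / (3 * a ^ 4)) := ⟨_, rfl⟩
  refine (Metric.isBounded_closedBall (x := (0 : Fin 3 → ℝ)) (r := R)).subset ?_
  rintro w ⟨q, ⟨hq, hq0⟩, rfl⟩
  simp only [Metric.mem_closedBall, dist_zero_right]
  have hq0' : (q 0) ≠ 0 := ne_of_gt hq0
  -- expand the shell equation and multiply by a²
  have hshell : g 0 0 * q 0 * q 0 + g 0 1 * q 0 * q 1 + g 0 2 * q 0 * q 2 + g 0 3 * q 0 * q 3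
      + g 1 0 * q 1 * q 0 + g 1 1 * q 1 * q 1 + g 1 2 * q 1 * q 2 + g 1 3 * q 1 * q 3
      + g 2 0 * q 2 * q 0 + g 2 1 * q 2 * q 1 + g 2 2 * q 2 * q 2 + g 2 3 * q 2 * q 3
      + g 3 0 * q 3 * q 0 + g 3 1 * q 3 * q 1 + g 3 2 * q 3 * q 2 + g 3 3 * q 3 * q 3
      = -m ^ 2 := by
    rw [← hq]
    simp [Fin.sum_univ_four]
    ring
  have hshell2 : (g 0 0 * q 0 * q 0 + g 0 1 * q 0 * q 1 + g 0 2 * q 0 * q 2 + g 0 3 * q 0 * q 3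
      + g 1 0 * q 1 * q 0 + g 1 1 * q 1 * q 1 + g 1 2 * q 1 * q 2 + g 1 3 * q 1 * q 3
      + g 2 0 * q 2 * q 0 + g 2 1 * q 2 * q 1 + g 2 2 * q 2 * q 2 + g 2 3 * q 2 * q 3
      + g 3 0 * q 3 * q 0 + g 3 1 * q 3 * q 1 + g 3 2 * q 3 * q 2 + g 3 3 * q 3 * q 3) * a ^ 2
      = -m ^ 2 * a ^ 2 := by rw [hshell]
  -- positivity hypothesis applied to the spatial part, multiplied by a²
  have hA := hg (fun A => q A.succ)
  have e1 : ((0 : Fin 3)).succ = (1 : Fin 4) := rfl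
  have e2 : ((1 : Fin 3)).succ = (2 : Fin 4) := rfl
  have e3 : ((2 : Fin 3)).succ = (3 : Fin 4) := rfl
  simp only [Fin.sum_univ_three, e1, e2, e3] at hA
  have hA2 := mul_le_mul_of_nonneg_right hA ha2.le
  -- AM-GM helper
  have lem : ∀ c x y : ℝ, -(c * x * y) * a ^ 2 ≤ a ^ 4 / 8 * y ^ 2 + 2 * c ^ 2 * x ^ 2 := by
    intro c x y
    nlinarith [sq_nonneg (a ^ 2 * y + 4 * c * x)]
  have hg00 : -(g 0 0 * q 0 * q 0) * a ^ 2 ≤ |g 0 0| * q 0 ^ 2 * a ^ 2 := by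
    have h1 : -(g 0 0 * q 0 * q 0) ≤ |g 0 0| * q 0 ^ 2 := by
      calc -(g 0 0 * q 0 * q 0) = -(g 0 0) * q 0 ^ 2 := by ring
        _ ≤ |g 0 0| * q 0 ^ 2 :=
          mul_le_mul_of_nonneg_right (neg_le_abs _) (sq_nonneg _)
    exact mul_le_mul_of_nonneg_right h1 ha2.le
  have l1 := lem (g 0 1) (q 0) (q 1)
  have l2 := lem (g 1 0) (q 0) (q 1)
  have l3 := lem (g 0 2) (q 0) (q 2)
  have l4 := lem (g 2 0) (q 0) (q 2)
  have l5 := lem (g 0 3) (q 0) (q 3)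
  have l6 := lem (g 3 0) (q 0) (q 3)
  have hm2 : (0:ℝ) ≤ m ^ 2 * a ^ 2 := by positivity
  have hT : 3 * a ^ 4 / 4 * (q 1 ^ 2 + q 2 ^ 2 + q 3 ^ 2) ≤ K * q 0 ^ 2 := by
    rw [hKdef]
    linarith [hA2, hshell2, l1, l2, l3, l4, l5, l6, hg00, hm2]
  have hS : (q 1 / q 0) ^ 2 + (q 2 / q 0) ^ 2 + (q 3 / q 0) ^ 2 ≤ 4 * K / (3 * a ^ 4) := by
    have hq02 : (0:ℝ) < q 0 ^ 2 := by positivity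
    rw [div_pow, div_pow, div_pow, ← add_div, ← add_div,
      div_le_div_iff₀ hq02 (by positivity)]
    linarith [hT]
  rw [pi_norm_le_iff_of_nonneg (by rw [hRdef]; exact Real.sqrt_nonneg _)]
  intro A
  rw [Real.norm_eq_abs, hRdef]
  have hx2 : (q A.succ / q 0) ^ 2 ≤ 4 * K / (3 * a ^ 4) := by
    have sq1 := sq_nonneg (q 1 / q 0)
    have sq2 := sq_nonneg (q 2 / q 0)
    have sq3 := sq_nonneg (q 3 / q 0)
    fin_cases A
    · show (q 1 / q 0) ^ 2 ≤ 4 * K / (3 * a ^ 4); linarith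
    · show (q 2 / q 0) ^ 2 ≤ 4 * K / (3 * a ^ 4); linarith
    · show (q 3 / q 0) ^ 2 ≤ 4 * K / (3 * a ^ 4); linarith
  calc |q A.succ / q 0| = Real.sqrt ((q A.succ / q 0) ^ 2) := by
        rw [Real.sqrt_sq_eq_abs]
    _ ≤ Real.sqrt (4 * K / (3 * a ^ 4)) := Real.sqrt_le_sqrt hx2
end

section
/- For all real numbers a, b, c, with φ(v) = (a·f(v) + b·g(v) + c)², one has ∫_B φ(v) s(v) dv = (8π/189)·a² + (8π/63)·b² + (4π/15)·c². -/
open MeasureTheory Real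

section Aux

open Set intervalIntegral

lemma sin4pi : Real.sin (4 * π) = 0 := by
  have := Real.sin_nat_mul_pi 4; norm_num at this; exact this

lemma h_sc2 : (∫ θ in (-π)..π, Real.sin θ ^ 2 * Real.cos θ ^ 2) = π / 4 := by
  rw [integral_sin_sq_mul_cos_sq]; simp [sin4pi, mul_neg, Real.sin_neg]; ring

lemma h_s2 : (∫ θ in (-π)..π, Real.sin θ ^ 2) = π := by simp

lemma h_s4 : (∫ θ in (-π)..π, Real.sin θ ^ 4) = 3 * π / 4 := by
  have := @integral_sin_pow (-π) π 2
  norm_num [Real.sin_neg] at this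
  rw [this]; ring

lemma h_s3c : (∫ θ in (-π)..π, Real.sin θ ^ 3 * Real.cos θ) = 0 := by
  have := @integral_sin_pow_mul_cos_pow_odd (-π) π 3 0
  norm_num [Real.sin_neg] at this
  simpa using this

lemma h_s2c : (∫ θ in (-π)..π, Real.sin θ ^ 2 * Real.cos θ) = 0 := by
  simp [Real.sin_neg]

lemma h_s3 : (∫ θ in (-π)..π, Real.sin θ ^ 3) = 0 := by
  have := @integral_sin_pow (-π) π 1
  norm_num [Real.sin_neg] at this
  simpa using this

lemma theta_int (a b c x r : ℝ) :
    (∫ θ in (-π)..π,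
        r • ((a * ((1 + x) * (r * Real.cos θ)) + b * ((1 + x) * (r * Real.sin θ)) + c) ^ 2
          * (r * Real.sin θ) ^ 2))
    = π / 4 * (a * (1 + x)) ^ 2 * r ^ 5 + 3 * π / 4 * (b * (1 + x)) ^ 2 * r ^ 5
      + π * c ^ 2 * r ^ 3 := by
  have ii : ∀ {f : ℝ → ℝ}, Continuous f → IntervalIntegrable f volume (-π) π :=
    fun hf => hf.intervalIntegrable _ _
  have key : EqOn
      (fun θ : ℝ => r • ((a * ((1 + x) * (r * Real.cos θ)) + b * ((1 + x) * (r * Real.sin θ)) + c) ^ 2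
          * (r * Real.sin θ) ^ 2))
      (fun θ : ℝ =>
        (a * (1 + x)) ^ 2 * r ^ 5 * (Real.sin θ ^ 2 * Real.cos θ ^ 2)
        + ((b * (1 + x)) ^ 2 * r ^ 5 * Real.sin θ ^ 4
        + (c ^ 2 * r ^ 3 * Real.sin θ ^ 2
        + (2 * (a * (1 + x)) * (b * (1 + x)) * r ^ 5 * (Real.sin θ ^ 3 * Real.cos θ)
        + (2 * (a * (1 + x)) * c * r ^ 4 * (Real.sin θ ^ 2 * Real.cos θ)
        + 2 * (b * (1 + x)) * c * r ^ 4 * Real.sin θ ^ 3)))))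
      (Set.uIcc (-π) π) := by
    intro θ _; simp only [smul_eq_mul]; ring
  rw [integral_congr key]
  rw [integral_add (ii (by fun_prop)) (ii (by fun_prop)),
      integral_add (ii (by fun_prop)) (ii (by fun_prop)),
      integral_add (ii (by fun_prop)) (ii (by fun_prop)),
      integral_add (ii (by fun_prop)) (ii (by fun_prop)),
      integral_add (ii (by fun_prop)) (ii (by fun_prop))]
  rw [intervalIntegral.integral_const_mul, intervalIntegral.integral_const_mul, intervalIntegral.integral_const_mul, intervalIntegral.integral_const_mul,
      intervalIntegral.integral_const_mul, intervalIntegral.integral_const_mul]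
  rw [h_sc2, h_s4, h_s2, h_s3c, h_s2c, h_s3]
  ring

lemma r_int (A B c R : ℝ) :
    (∫ r in (0:ℝ)..R, (π / 4 * A ^ 2 * r ^ 5 + 3 * π / 4 * B ^ 2 * r ^ 5 + π * c ^ 2 * r ^ 3))
    = π / 24 * A ^ 2 * R ^ 6 + π / 8 * B ^ 2 * R ^ 6 + π / 4 * c ^ 2 * R ^ 4 := by
  have ii : ∀ {f : ℝ → ℝ}, Continuous f → IntervalIntegrable f volume 0 R :=
    fun hf => hf.intervalIntegrable _ _
  rw [integral_add (((ii (by fun_prop)).add (ii (by fun_prop)))) (ii (by fun_prop)),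
      integral_add (ii (by fun_prop)) (ii (by fun_prop)),
      intervalIntegral.integral_const_mul, intervalIntegral.integral_const_mul, intervalIntegral.integral_const_mul, integral_pow, integral_pow]
  norm_num; ring

lemma e1 : (∫ x in (-1:ℝ)..1, (1 + x) ^ 2 * (1 - x ^ 2) ^ 3) = 64 / 63 := by
  have ii : ∀ {f : ℝ → ℝ}, Continuous f → IntervalIntegrable f volume (-1) 1 :=
    fun hf => hf.intervalIntegrable _ _
  have key : EqOn (fun x : ℝ => (1 + x) ^ 2 * (1 - x ^ 2) ^ 3)
      (fun x : ℝ => 1 + (2 * x ^ 1 + ((-2) * x ^ 2 + ((-6) * x ^ 3 + (6 * x ^ 5 +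
        (2 * x ^ 6 + ((-2) * x ^ 7 + (-1) * x ^ 8)))))))
      (Set.uIcc (-1) 1) := by
    intro x _; ring
  rw [integral_congr key]
  rw [integral_add (ii (by fun_prop)) (ii (by fun_prop)),
      integral_add (ii (by fun_prop)) (ii (by fun_prop)),
      integral_add (ii (by fun_prop)) (ii (by fun_prop)),
      integral_add (ii (by fun_prop)) (ii (by fun_prop)),
      integral_add (ii (by fun_prop)) (ii (by fun_prop)),
      integral_add (ii (by fun_prop)) (ii (by fun_prop)),
      integral_add (ii (by fun_prop)) (ii (by fun_prop))]
  simp only [intervalIntegral.integral_const_mul, integral_pow, intervalIntegral.integral_const]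
  norm_num

lemma e2 : (∫ x in (-1:ℝ)..1, (1 - x ^ 2) ^ 2) = 16 / 15 := by
  have ii : ∀ {f : ℝ → ℝ}, Continuous f → IntervalIntegrable f volume (-1) 1 :=
    fun hf => hf.intervalIntegrable _ _
  have key : EqOn (fun x : ℝ => (1 - x ^ 2) ^ 2)
      (fun x : ℝ => 1 + ((-2) * x ^ 2 + 1 * x ^ 4)) (Set.uIcc (-1) 1) := by
    intro x _; ring
  rw [integral_congr key]
  rw [integral_add (ii (by fun_prop)) (ii (by fun_prop)),
      integral_add (ii (by fun_prop)) (ii (by fun_prop))]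
  simp only [intervalIntegral.integral_const_mul, integral_pow, intervalIntegral.integral_const]
  norm_num

lemma x_int (a b c : ℝ) :
    (∫ x in (-1:ℝ)..1, (π / 24 * (a * (1 + x)) ^ 2 * (1 - x ^ 2) ^ 3
        + π / 8 * (b * (1 + x)) ^ 2 * (1 - x ^ 2) ^ 3 + π / 4 * c ^ 2 * (1 - x ^ 2) ^ 2))
    = 8 * π / 189 * a ^ 2 + 8 * π / 63 * b ^ 2 + 4 * π / 15 * c ^ 2 := by
  have ii : ∀ {f : ℝ → ℝ}, Continuous f → IntervalIntegrable f volume (-1) 1 :=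
    fun hf => hf.intervalIntegrable _ _
  have key : EqOn (fun x : ℝ => (π / 24 * (a * (1 + x)) ^ 2 * (1 - x ^ 2) ^ 3
        + π / 8 * (b * (1 + x)) ^ 2 * (1 - x ^ 2) ^ 3 + π / 4 * c ^ 2 * (1 - x ^ 2) ^ 2))
      (fun x : ℝ => (π / 24 * a ^ 2 + π / 8 * b ^ 2) * ((1 + x) ^ 2 * (1 - x ^ 2) ^ 3)
        + π / 4 * c ^ 2 * (1 - x ^ 2) ^ 2) (Set.uIcc (-1) 1) := by
    intro x _; ring
  rw [integral_congr key,
      integral_add (ii (by fun_prop)) (ii (by fun_prop)),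
      intervalIntegral.integral_const_mul, intervalIntegral.integral_const_mul, e1, e2]
  ring

lemma inner_int (a b c x : ℝ) :
    (∫ w : ℝ × ℝ, ({w : ℝ × ℝ | x ^ 2 + w.1 ^ 2 + w.2 ^ 2 < 1}).indicator
        (fun w => (a * ((1 + x) * w.1) + b * ((1 + x) * w.2) + c) ^ 2 * w.2 ^ 2) w)
    = (Set.Ioo (-1:ℝ) 1).indicator
        (fun x => π / 24 * (a * (1 + x)) ^ 2 * (1 - x ^ 2) ^ 3
          + π / 8 * (b * (1 + x)) ^ 2 * (1 - x ^ 2) ^ 3 + π / 4 * c ^ 2 * (1 - x ^ 2) ^ 2) x := by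
  have habs : x ^ 2 < 1 ↔ x ∈ Set.Ioo (-1:ℝ) 1 := by
    rw [Set.mem_Ioo, ← abs_lt]
    exact sq_lt_one_iff_abs_lt_one x
  by_cases hx : x ^ 2 < 1
  · set R := Real.sqrt (1 - x ^ 2) with hRdef
    have h1x : (0:ℝ) < 1 - x ^ 2 := by linarith
    have hR : 0 < R := Real.sqrt_pos.mpr h1x
    have hR2 : R ^ 2 = 1 - x ^ 2 := Real.sq_sqrt h1x.le
    rw [← integral_comp_polarCoord_symm]
    set h : ℝ × ℝ → ℝ := fun q =>
      q.1 • ((a * ((1 + x) * (q.1 * Real.cos q.2)) + b * ((1 + x) * (q.1 * Real.sin q.2)) + c) ^ 2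
        * (q.1 * Real.sin q.2) ^ 2) with hdef
    have hcongr : EqOn
        (fun q : ℝ × ℝ => q.1 • ({w : ℝ × ℝ | x ^ 2 + w.1 ^ 2 + w.2 ^ 2 < 1}).indicator
          (fun w => (a * ((1 + x) * w.1) + b * ((1 + x) * w.2) + c) ^ 2 * w.2 ^ 2)
          (polarCoord.symm q))
        ((Set.Ioo (0:ℝ) R ×ˢ Set.Ioo (-π) π).indicator h)
        polarCoord.target := by
      intro q hq
      rw [polarCoord_target] at hq
      obtain ⟨hq1, hq2⟩ := hq
      rw [Set.mem_Ioi] at hq1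
      have hsymm : polarCoord.symm q = (q.1 * Real.cos q.2, q.1 * Real.sin q.2) := rfl
      have hcond : (polarCoord.symm q ∈ {w : ℝ × ℝ | x ^ 2 + w.1 ^ 2 + w.2 ^ 2 < 1})
          ↔ q ∈ Set.Ioo (0:ℝ) R ×ˢ Set.Ioo (-π) π := by
        rw [hsymm]
        simp only [Set.mem_setOf_eq, Set.mem_prod, Set.mem_Ioo]
        have hsq : x ^ 2 + (q.1 * Real.cos q.2) ^ 2 + (q.1 * Real.sin q.2) ^ 2
            = x ^ 2 + q.1 ^ 2 := by
          have := Real.sin_sq_add_cos_sq q.2; nlinarith [this]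
        rw [hsq]
        constructor
        · intro hlt
          refine ⟨⟨hq1, ?_⟩, hq2⟩
          rw [hRdef]
          exact (Real.lt_sqrt hq1.le).mpr (by linarith)
        · rintro ⟨⟨_, hru⟩, _⟩
          have := (Real.lt_sqrt hq1.le).mp hru
          linarith
      dsimp only
      by_cases hmem : polarCoord.symm q ∈ {w : ℝ × ℝ | x ^ 2 + w.1 ^ 2 + w.2 ^ 2 < 1}
      · rw [Set.indicator_of_mem hmem, Set.indicator_of_mem (hcond.mp hmem)]
        rw [hdef, hsymm]
      · rw [Set.indicator_of_notMem hmem, Set.indicator_of_notMem (fun hc => hmem (hcond.mpr hc))]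
        simp
    rw [setIntegral_congr_fun polarCoord.open_target.measurableSet hcongr]
    rw [setIntegral_indicator ((isOpen_Ioo.prod isOpen_Ioo).measurableSet)]
    have hinter : polarCoord.target ∩ (Set.Ioo (0:ℝ) R ×ˢ Set.Ioo (-π) π)
        = Set.Ioo (0:ℝ) R ×ˢ Set.Ioo (-π) π := by
      rw [polarCoord_target]
      apply Set.inter_eq_self_of_subset_right
      exact Set.prod_mono Set.Ioo_subset_Ioi_self (subset_refl _)
    rw [hinter]
    have hint : IntegrableOn h (Set.Ioo (0:ℝ) R ×ˢ Set.Ioo (-π) π) volume := by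
      have hc : Continuous h := by rw [hdef]; fun_prop
      have := (hc.continuousOn).integrableOn_compact (μ := volume)
        ((isCompact_Icc (a := (0:ℝ)) (b := R)).prod (isCompact_Icc (a := -π) (b := π)))
      exact this.mono_set (Set.prod_mono Set.Ioo_subset_Icc_self Set.Ioo_subset_Icc_self)
    rw [MeasureTheory.Measure.volume_eq_prod] at hint ⊢
    rw [setIntegral_prod h hint]
    have hinner : ∀ r : ℝ, (∫ θ in Set.Ioo (-π) π, h (r, θ))
        = π / 4 * (a * (1 + x)) ^ 2 * r ^ 5 + 3 * π / 4 * (b * (1 + x)) ^ 2 * r ^ 5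
          + π * c ^ 2 * r ^ 3 := by
      intro r
      rw [← MeasureTheory.integral_Ioc_eq_integral_Ioo,
        ← intervalIntegral.integral_of_le (by linarith [Real.pi_pos] : -π ≤ π)]
      exact theta_int a b c x r
    simp only [hinner]
    rw [← MeasureTheory.integral_Ioc_eq_integral_Ioo,
      ← intervalIntegral.integral_of_le hR.le, r_int]
    have h6 : R ^ 6 = (1 - x ^ 2) ^ 3 := by rw [← hR2]; ring
    have h4 : R ^ 4 = (1 - x ^ 2) ^ 2 := by rw [← hR2]; ring
    rw [h6, h4, Set.indicator_of_mem (habs.mp hx)]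
  · have hempty : {w : ℝ × ℝ | x ^ 2 + w.1 ^ 2 + w.2 ^ 2 < 1} = ∅ := by
      ext w; simp only [Set.mem_setOf_eq, Set.mem_empty_iff_false, iff_false, not_lt]
      nlinarith [sq_nonneg w.1, sq_nonneg w.2]
    rw [hempty, Set.indicator_of_notMem (fun hc => hx (habs.mpr hc))]
    simp

noncomputable def Tm : (ℝ × (ℝ × ℝ)) ≃ᵐ EuclideanSpace ℝ (Fin 3) :=
  ((MeasurableEquiv.refl ℝ).prodCongr (MeasurableEquiv.finTwoArrow).symm).trans
    (((MeasurableEquiv.piFinSuccAbove (fun _ : Fin 3 => ℝ) 0).symm).trans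
      (MeasurableEquiv.toLp 2 (Fin 3 → ℝ)))

theorem Tm_mp : MeasurePreserving Tm volume volume := by
  have h1 : MeasurePreserving
      (⇑((MeasurableEquiv.refl ℝ).prodCongr (MeasurableEquiv.finTwoArrow (α := ℝ)).symm))
      volume volume := by
    have := (MeasurePreserving.id (volume : Measure ℝ)).prod
      ((volume_preserving_finTwoArrow ℝ).symm _)
    exact this
  exact (((EuclideanSpace.volume_preserving_symm_measurableEquiv_toLp (Fin 3)).symm _).comp
    ((volume_preserving_piFinSuccAbove (fun _ : Fin 3 => ℝ) 0).symm _)).comp h1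

end Aux

/-- (D.26): with `φ(v) = (a f(v) + b g(v) + c)²`, `f(v) = (1+v₂)v₃`,
`g(v) = (1+v₂)v₄`, `s(v) = (v₄)²` on the open unit ball `B ⊂ ℝ³`, one has
`⟨φ,s⟩ = (8π/189)a² + (8π/63)b² + (4π/15)c²`; coordinates `v 0, v 1, v 2`
are `v₂, v₃, v₄`. -/
theorem integral_phi_s (a b c : ℝ) :
    (∫ v in Metric.ball (0 : EuclideanSpace ℝ (Fin 3)) 1,
      (a * ((1 + v 0) * v 1) + b * ((1 + v 0) * v 2) + c) ^ 2 * (v 2) ^ 2)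
      = (8 * π / 189) * a ^ 2 + (8 * π / 63) * b ^ 2 + (4 * π / 15) * c ^ 2 := by
  set G : EuclideanSpace ℝ (Fin 3) → ℝ := fun v =>
    (a * ((1 + v 0) * v 1) + b * ((1 + v 0) * v 2) + c) ^ 2 * (v 2) ^ 2 with hG
  set S : Set (ℝ × (ℝ × ℝ)) := {p | p.1 ^ 2 + p.2.1 ^ 2 + p.2.2 ^ 2 < 1} with hS
  set F : ℝ × (ℝ × ℝ) → ℝ := fun p =>
    (a * ((1 + p.1) * p.2.1) + b * ((1 + p.1) * p.2.2) + c) ^ 2 * (p.2.2) ^ 2 with hF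
  have hSopen : IsOpen S := by
    have : Continuous fun p : ℝ × (ℝ × ℝ) => p.1 ^ 2 + p.2.1 ^ 2 + p.2.2 ^ 2 := by fun_prop
    exact isOpen_lt this continuous_const
  have hpre : Tm ⁻¹' (Metric.ball (0 : EuclideanSpace ℝ (Fin 3)) 1) = S := by
    ext p
    have h0 : (Tm p) 0 = p.1 := rfl
    have h1 : (Tm p) 1 = p.2.1 := rfl
    have h2 : (Tm p) 2 = p.2.2 := rfl
    simp only [Set.mem_preimage, Metric.mem_ball, dist_zero_right, hS, Set.mem_setOf_eq]
    rw [EuclideanSpace.norm_eq]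
    rw [Fin.sum_univ_three, h0, h1, h2]
    rw [Real.sqrt_lt' one_pos]
    simp [sq_abs]
  have step1 : (∫ v in Metric.ball (0 : EuclideanSpace ℝ (Fin 3)) 1, G v)
      = ∫ p in S, F p := by
    rw [← Tm_mp.setIntegral_preimage_emb Tm.measurableEmbedding G _, hpre]
    rfl
  rw [step1]
  rw [← MeasureTheory.integral_indicator hSopen.measurableSet]
  rw [MeasureTheory.Measure.volume_eq_prod]
  have hFc : Continuous F := by fun_prop
  have hint : Integrable (S.indicator F) ((volume : Measure ℝ).prod (volume : Measure (ℝ × ℝ))) := by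
    rw [← MeasureTheory.Measure.volume_eq_prod, integrable_indicator_iff hSopen.measurableSet]
    have hcomp : IsCompact ((Set.Icc (-1:ℝ) 1) ×ˢ (Set.Icc (-1:ℝ) 1 ×ˢ Set.Icc (-1:ℝ) 1)) :=
      isCompact_Icc.prod (isCompact_Icc.prod isCompact_Icc)
    have := (hFc.continuousOn).integrableOn_compact (μ := volume) hcomp
    refine this.mono_set ?_
    rintro ⟨x, y, z⟩ hp
    simp only [hS, Set.mem_setOf_eq] at hp
    have hx : x ^ 2 ≤ 1 := by nlinarith [sq_nonneg y, sq_nonneg z]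
    have hy : y ^ 2 ≤ 1 := by nlinarith [sq_nonneg x, sq_nonneg z]
    have hz : z ^ 2 ≤ 1 := by nlinarith [sq_nonneg x, sq_nonneg y]
    refine ⟨⟨by nlinarith, by nlinarith⟩, ⟨by nlinarith, by nlinarith⟩, by nlinarith, by nlinarith⟩
  rw [MeasureTheory.integral_prod _ hint]
  have hinner : ∀ x : ℝ, (∫ w : ℝ × ℝ, S.indicator F (x, w))
      = (Set.Ioo (-1:ℝ) 1).indicator
        (fun x => π / 24 * (a * (1 + x)) ^ 2 * (1 - x ^ 2) ^ 3
          + π / 8 * (b * (1 + x)) ^ 2 * (1 - x ^ 2) ^ 3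
          + π / 4 * c ^ 2 * (1 - x ^ 2) ^ 2) x := by
    intro x
    rw [← inner_int a b c x]
    congr 1
  simp only [hinner]
  rw [MeasureTheory.integral_indicator measurableSet_Ioo,
    ← MeasureTheory.integral_Ioc_eq_integral_Ioo,
    ← intervalIntegral.integral_of_le (by norm_num : (-1:ℝ) ≤ 1)]
  rw [x_int]
end

section
/- Let a, b, c, h₁, h₂ be real numbers and φ(v) = (a·f(v) + b·g(v) + c)². Then the pair of equations ∫_B φ(v) f(v) dv = h₁ and ∫_B φ(v) g(v) dv = h₂ holds if and only if a·c = 105·h₁/(64π) and b·c = 105·h₂/(64π). -/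
open MeasureTheory Real Set

noncomputable section
namespace ISRed

abbrev E3 := EuclideanSpace ℝ (Fin 3)
abbrev B : Set E3 := Metric.ball (0 : E3) 1

@[simp] lemma cons_val_five {α : Type*} {m : ℕ} (x : α) (u : Fin (m+5) → α) :
    Matrix.vecCons x u 5 = Matrix.vecHead (Matrix.vecTail (Matrix.vecTail
      (Matrix.vecTail (Matrix.vecTail u)))) := rfl

def mk3 (x y z : ℝ) : E3 := (WithLp.equiv 2 (Fin 3 → ℝ)).symm ![x, y, z]
@[simp] lemma mk3_apply_zero (x y z : ℝ) : mk3 x y z 0 = x := rfl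
@[simp] lemma mk3_apply_one (x y z : ℝ) : mk3 x y z 1 = y := rfl
@[simp] lemma mk3_apply_two (x y z : ℝ) : mk3 x y z 2 = z := rfl

lemma norm_eq' (v : E3) : ‖v‖ = Real.sqrt (v 0^2 + v 1^2 + v 2^2) := by
  rw [EuclideanSpace.norm_eq, Fin.sum_univ_three]; simp [sq_abs]

lemma norm_sq_eq (v : E3) : ‖v‖^2 = v 0^2 + v 1^2 + v 2^2 := by
  rw [norm_eq', Real.sq_sqrt (by positivity)]

def mkIso (m : E3 → E3) (hadd : ∀ x y, m (x + y) = m x + m y)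
    (hsmul : ∀ (r : ℝ) (x : E3), m (r • x) = r • m x)
    (hinv : Function.Involutive m) (hnorm : ∀ x, ‖m x‖ = ‖x‖) : E3 ≃ₗᵢ[ℝ] E3 :=
  { LinearEquiv.ofInvolutive
      { toFun := m, map_add' := hadd, map_smul' := hsmul } hinv with
    norm_map' := hnorm }

@[simp] lemma mkIso_apply (m) (h1) (h2) (h3) (h4) (v : E3) :
    mkIso m h1 h2 h3 h4 v = m v := rfl

def neg0 : E3 ≃ₗᵢ[ℝ] E3 :=
  mkIso (fun v => mk3 (-(v 0)) (v 1) (v 2))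
    (by intro x y; ext i; fin_cases i <;> simp <;> ring)
    (by intro r x; ext i; fin_cases i <;> simp <;> ring)
    (show Function.Involutive _ by intro v; ext i; fin_cases i <;> simp)
    (by intro v; rw [norm_eq', norm_eq']; simp)

def neg1 : E3 ≃ₗᵢ[ℝ] E3 :=
  mkIso (fun v => mk3 (v 0) (-(v 1)) (v 2))
    (by intro x y; ext i; fin_cases i <;> simp <;> ring)
    (by intro r x; ext i; fin_cases i <;> simp <;> ring)
    (show Function.Involutive _ by intro v; ext i; fin_cases i <;> simp)
    (by intro v; rw [norm_eq', norm_eq']; simp)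

def neg2 : E3 ≃ₗᵢ[ℝ] E3 :=
  mkIso (fun v => mk3 (v 0) (v 1) (-(v 2)))
    (by intro x y; ext i; fin_cases i <;> simp <;> ring)
    (by intro r x; ext i; fin_cases i <;> simp <;> ring)
    (show Function.Involutive _ by intro v; ext i; fin_cases i <;> simp)
    (by intro v; rw [norm_eq', norm_eq']; simp)

def swap01 : E3 ≃ₗᵢ[ℝ] E3 :=
  mkIso (fun v => mk3 (v 1) (v 0) (v 2))
    (by intro x y; ext i; fin_cases i <;> simp)
    (by intro r x; ext i; fin_cases i <;> simp)
    (show Function.Involutive _ by intro v; ext i; fin_cases i <;> simp)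
    (by intro v; rw [norm_eq', norm_eq']; simp only [mk3_apply_zero, mk3_apply_one, mk3_apply_two]; ring_nf)

def swap02 : E3 ≃ₗᵢ[ℝ] E3 :=
  mkIso (fun v => mk3 (v 2) (v 1) (v 0))
    (by intro x y; ext i; fin_cases i <;> simp)
    (by intro r x; ext i; fin_cases i <;> simp)
    (show Function.Involutive _ by intro v; ext i; fin_cases i <;> simp)
    (by intro v; rw [norm_eq', norm_eq']; simp only [mk3_apply_zero, mk3_apply_one, mk3_apply_two]; ring_nf)

def swap12 : E3 ≃ₗᵢ[ℝ] E3 :=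
  mkIso (fun v => mk3 (v 0) (v 2) (v 1))
    (by intro x y; ext i; fin_cases i <;> simp)
    (by intro r x; ext i; fin_cases i <;> simp)
    (show Function.Involutive _ by intro v; ext i; fin_cases i <;> simp)
    (by intro v; rw [norm_eq', norm_eq']; simp only [mk3_apply_zero, mk3_apply_one, mk3_apply_two]; ring_nf)

def rot : E3 ≃ₗᵢ[ℝ] E3 :=
  mkIso (fun v => mk3 ((v 0 + v 1)/Real.sqrt 2) ((v 0 - v 1)/Real.sqrt 2) (v 2))
    (by intro x y; ext i; fin_cases i <;> simp <;> ring)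
    (by intro r x; ext i; fin_cases i <;> simp <;> ring)
    (show Function.Involutive _ by
      intro v; ext i
      have hsq : Real.sqrt 2 * Real.sqrt 2 = 2 := Real.mul_self_sqrt (by norm_num)
      have h2 : Real.sqrt 2 ≠ 0 := by positivity
      fin_cases i <;> simp <;> field_simp <;> simp [Real.sq_sqrt] <;> ring)
    (by
      intro v; rw [norm_eq', norm_eq']
      have hsq : Real.sqrt 2 * Real.sqrt 2 = 2 := Real.mul_self_sqrt (by norm_num)
      have h2 : Real.sqrt 2 ≠ 0 := by positivity
      simp only [mk3_apply_zero, mk3_apply_one, mk3_apply_two]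
      congr 1
      field_simp
      rw [Real.sq_sqrt (by norm_num)]
      ring)

lemma intOn {F : E3 → ℝ} (hF : Continuous F) : IntegrableOn F B :=
  (hF.continuousOn.integrableOn_compact (isCompact_closedBall _ _)).mono_set
    Metric.ball_subset_closedBall

lemma preimage_ball (e : E3 ≃ₗᵢ[ℝ] E3) : e ⁻¹' B = B := by
  ext v
  simp [Metric.mem_ball, dist_zero_right, e.norm_map]

lemma integral_comp_iso (e : E3 ≃ₗᵢ[ℝ] E3) (F : E3 → ℝ) :
    ∫ v in B, F (e v) = ∫ v in B, F v := by
  have h := (e.measurePreserving).setIntegral_preimage_emb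
    (e.toMeasurableEquiv.measurableEmbedding) F B
  rwa [preimage_ball e] at h

lemma odd_vanish (F : E3 → ℝ) (e : E3 ≃ₗᵢ[ℝ] E3) (h : ∀ v, F (e v) = -F v) :
    ∫ v in B, F v = 0 := by
  have h1 := integral_comp_iso e F
  simp only [h, integral_neg] at h1
  linarith

lemma int_sum {n : ℕ} (k : Fin n → ℝ) (F : Fin n → E3 → ℝ) (hF : ∀ i, Continuous (F i)) :
    ∫ v in B, (∑ i, k i * F i v) = ∑ i, k i * ∫ v in B, F i v := by
  rw [integral_finset_sum _ (fun i _ => ((intOn (hF i)).const_mul (k i)))]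
  exact Finset.sum_congr rfl fun i _ => integral_const_mul _ _

lemma vol_ball : (volume B).toReal = 4 * π / 3 := by
  rw [EuclideanSpace.volume_ball]
  have h52 : Real.Gamma ((Fintype.card (Fin 3) : ℝ) / 2 + 1) = 3/4 * Real.sqrt π := by
    have : (Fintype.card (Fin 3) : ℝ) / 2 + 1 = (1/2 + 1) + 1 := by
      simp [Fintype.card_fin]; ring
    rw [this, Real.Gamma_add_one (by norm_num), Real.Gamma_add_one (by norm_num),
      Real.Gamma_one_half_eq]
    ring
  rw [h52]
  have hπ : Real.sqrt π > 0 := Real.sqrt_pos.2 pi_pos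
  rw [ENNReal.toReal_mul]
  simp only [ENNReal.ofReal_one, one_pow, ENNReal.toReal_one, one_mul]
  rw [ENNReal.toReal_ofReal (by positivity)]
  rw [show Real.sqrt π ^ Fintype.card (Fin 3) = π * Real.sqrt π by
    simp [Fintype.card_fin, pow_succ, Real.mul_self_sqrt pi_pos.le]]
  field_simp

lemma radial (k : ℕ) : ∫ v in B, ‖v‖^k = 4 * π / (k+3) := by
  have key := MeasureTheory.integral_fun_norm_addHaar (volume : Measure E3)
    ((Iio (1:ℝ)).indicator (fun y => y^k))
  have hL : (fun x : E3 => ((Iio (1:ℝ)).indicator (fun y => y^k)) ‖x‖)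
      = B.indicator (fun v => ‖v‖^k) := by
    funext x
    by_cases hx : ‖x‖ < 1 <;>
      simp [Set.indicator, hx, Metric.mem_ball, dist_zero_right]
  rw [hL, integral_indicator measurableSet_ball] at key
  rw [key]
  have hdim : Module.finrank ℝ E3 = 3 := by simp [finrank_euclideanSpace]
  rw [hdim]
  have hR : ∫ y in Ioi (0:ℝ), y ^ (3-1) • ((Iio (1:ℝ)).indicator (fun y => y^k)) y
      = 1 / (k+3) := by
    have : ∀ y : ℝ, y ^ (3-1) • ((Iio (1:ℝ)).indicator (fun y => y^k)) y
        = (Iio (1:ℝ)).indicator (fun y => y^(k+2)) y := by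
      intro y
      by_cases hy : y ∈ Iio (1:ℝ) <;> simp [Set.indicator, hy] <;> ring
    simp_rw [this]
    rw [setIntegral_indicator measurableSet_Iio]
    rw [show Ioi (0:ℝ) ∩ Iio 1 = Ioo 0 1 from Set.Ioi_inter_Iio]
    rw [← integral_Ioc_eq_integral_Ioo, ← intervalIntegral.integral_of_le zero_le_one,
      integral_pow]
    have : ((k:ℝ) + 2 + 1) = (k:ℝ) + 3 := by ring
    simp [this]
  rw [hR, measureReal_def, vol_ball, nsmul_eq_mul, smul_eq_mul]
  push_cast
  ring

/-! ### Moments -/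

lemma M200 : ∫ v in B, (v 0)^2 = 4*π/15 := by
  have e1 : ∫ v in B, (v 1)^2 = ∫ v in B, (v 0)^2 := by
    simpa [swap01] using integral_comp_iso swap01 (fun v => (v 0)^2)
  have e2 : ∫ v in B, (v 2)^2 = ∫ v in B, (v 0)^2 := by
    simpa [swap02] using integral_comp_iso swap02 (fun v => (v 0)^2)
  have hs : ∫ v in B, (v 0^2 + v 1^2 + v 2^2) = 4*π/5 := by
    have h := radial 2
    rw [show (fun v : E3 => ‖v‖^2) = fun v => v 0^2 + v 1^2 + v 2^2 from funext norm_sq_eq] at h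
    rw [h]; norm_num
  have hrw : (fun v : E3 => v 0^2 + v 1^2 + v 2^2)
      = fun v => ∑ i, (![1,1,1] : Fin 3 → ℝ) i *
        (![fun v : E3 => v 0^2, fun v => v 1^2, fun v => v 2^2] i v) := by
    funext v; simp [Fin.sum_univ_three, Matrix.vecHead, Matrix.vecTail]
  rw [hrw, int_sum _ _ (by intro i; fin_cases i <;> simp [Matrix.vecHead, Matrix.vecTail] <;> fun_prop)] at hs
  simp only [Fin.sum_univ_three, Fin.sum_univ_five, Fin.sum_univ_six, Matrix.cons_val_zero, Matrix.cons_val_one, Matrix.cons_val_two, Matrix.cons_val_three, Matrix.cons_val_four, cons_val_five, Matrix.cons_val_succ, Matrix.vecHead, Matrix.vecTail, Function.comp_apply, one_mul] at hs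
  linarith

lemma M020 : ∫ v in B, (v 1)^2 = 4*π/15 := by
  have e1 : ∫ v in B, (v 1)^2 = ∫ v in B, (v 0)^2 := by
    simpa [swap01] using integral_comp_iso swap01 (fun v => (v 0)^2)
  rw [e1, M200]

lemma M002 : ∫ v in B, (v 2)^2 = 4*π/15 := by
  have e2 : ∫ v in B, (v 2)^2 = ∫ v in B, (v 0)^2 := by
    simpa [swap02] using integral_comp_iso swap02 (fun v => (v 0)^2)
  rw [e2, M200]

lemma C220 : ∫ v in B, (v 0)^2 * (v 1)^2 = 4*π/105 := by
  have e01 : ∫ v in B, (v 1)^4 = ∫ v in B, (v 0)^4 := by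
    simpa [swap01] using integral_comp_iso swap01 (fun v => (v 0)^4)
  have e02 : ∫ v in B, (v 2)^4 = ∫ v in B, (v 0)^4 := by
    simpa [swap02] using integral_comp_iso swap02 (fun v => (v 0)^4)
  have c12 : ∫ v in B, (v 0)^2 * (v 2)^2 = ∫ v in B, (v 0)^2 * (v 1)^2 := by
    simpa [swap12] using integral_comp_iso swap12 (fun v => (v 0)^2 * (v 1)^2)
  have c01 : ∫ v in B, (v 1)^2 * (v 2)^2 = ∫ v in B, (v 0)^2 * (v 2)^2 := by
    simpa [swap01] using integral_comp_iso swap01 (fun v => (v 0)^2 * (v 2)^2)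
  -- expansion of ∫ ‖v‖⁴
  have hs : ∫ v in B, (v 0^2 + v 1^2 + v 2^2)^2 = 4*π/7 := by
    have h := radial 4
    rw [show (fun v : E3 => ‖v‖^4) = fun v => (v 0^2 + v 1^2 + v 2^2)^2 from
      funext fun v => by rw [show ‖v‖^4 = (‖v‖^2)^2 by ring, norm_sq_eq]] at h
    rw [h]; norm_num
  have hrw : (fun v : E3 => (v 0^2 + v 1^2 + v 2^2)^2)
      = fun v => ∑ i, (![1,1,1,2,2,2] : Fin 6 → ℝ) i *
        (![fun v : E3 => v 0^4, fun v => v 1^4, fun v => v 2^4,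
           fun v => v 0^2*v 1^2, fun v => v 0^2*v 2^2, fun v => v 1^2*v 2^2] i v) := by
    funext v; simp [Fin.sum_univ_six, Matrix.vecHead, Matrix.vecTail]; ring
  rw [hrw, int_sum _ _ (by intro i; fin_cases i <;> simp [Matrix.vecHead, Matrix.vecTail] <;> fun_prop)] at hs
  simp only [Fin.sum_univ_three, Fin.sum_univ_five, Fin.sum_univ_six, Matrix.cons_val_zero, Matrix.cons_val_one, Matrix.cons_val_two, Matrix.cons_val_three, Matrix.cons_val_four, cons_val_five, Matrix.cons_val_succ, Matrix.vecHead, Matrix.vecTail, Function.comp_apply, one_mul] at hs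
  -- rotation: ∫ v₀⁴ = 3 ∫ v₀²v₁²
  have hrot := integral_comp_iso rot (fun v => (v 0)^4)
  have h4 : Real.sqrt 2 ^ 4 = 4 := by
    rw [show (4:ℕ) = 2*2 from rfl, pow_mul, Real.sq_sqrt (by norm_num : (0:ℝ) ≤ 2)]
    norm_num
  have hrw2 : (fun v : E3 => ((rot v) 0)^4)
      = fun v => ∑ i, (![1/4, 1, 3/2, 1, 1/4] : Fin 5 → ℝ) i *
        (![fun v : E3 => v 0^4, fun v => v 0^3*v 1, fun v => v 0^2*v 1^2,
           fun v => v 0*v 1^3, fun v => v 1^4] i v) := by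
    funext v
    simp only [rot, mkIso_apply, mk3_apply_zero]
    rw [div_pow, h4, Fin.sum_univ_five]
    simp only [Matrix.cons_val_zero, Matrix.cons_val_one, Matrix.cons_val_two,
      Matrix.cons_val_three, Matrix.cons_val_four, Matrix.cons_val_succ,
      Matrix.vecHead, Matrix.vecTail, Function.comp_apply, one_mul]
    ring
  rw [show (fun v : E3 => (fun v : E3 => (v 0)^4) (rot v)) = fun v : E3 => ((rot v) 0)^4 from rfl] at hrot
  rw [hrw2, int_sum _ _ (by intro i; fin_cases i <;> simp [Matrix.vecHead, Matrix.vecTail] <;> fun_prop)] at hrot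
  simp only [Fin.sum_univ_three, Fin.sum_univ_five, Fin.sum_univ_six, Matrix.cons_val_zero, Matrix.cons_val_one, Matrix.cons_val_two, Matrix.cons_val_three, Matrix.cons_val_four, cons_val_five, Matrix.cons_val_succ, Matrix.vecHead, Matrix.vecTail, Function.comp_apply, one_mul] at hrot
  have o1 : ∫ v in B, (v 0)^3 * (v 1) = 0 := by
    apply odd_vanish _ neg1; intro v; simp [neg1] <;> ring
  have o2 : ∫ v in B, (v 0) * (v 1)^3 = 0 := by
    apply odd_vanish _ neg1; intro v; simp [neg1] <;> ring
  rw [o1, o2] at hrot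
  rw [e01, e02, c12, c01, c12] at hs
  -- hs : 3A + 6C = 4π/7 ; hrot : A/4 + 3/2 C + A/4 = A
  linarith

lemma C202 : ∫ v in B, (v 0)^2 * (v 2)^2 = 4*π/105 := by
  have c12 : ∫ v in B, (v 0)^2 * (v 2)^2 = ∫ v in B, (v 0)^2 * (v 1)^2 := by
    simpa [swap12] using integral_comp_iso swap12 (fun v => (v 0)^2 * (v 1)^2)
  rw [c12, C220]

/-! ### The two integrals -/

lemma Af2 : ∫ v in B, ((1 + v 0) * v 1)^2 = 32*π/105 := by
  have hrw : (fun v : E3 => ((1 + v 0) * v 1)^2)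
      = fun v => ∑ i, (![1,2,1] : Fin 3 → ℝ) i *
        (![fun v : E3 => v 1^2, fun v => v 0 * v 1^2, fun v => v 0^2 * v 1^2] i v) := by
    funext v; simp [Fin.sum_univ_three, Matrix.vecHead, Matrix.vecTail]; ring
  rw [hrw, int_sum _ _ (by intro i; fin_cases i <;> simp [Matrix.vecHead, Matrix.vecTail] <;> fun_prop)]
  simp only [Fin.sum_univ_three, Fin.sum_univ_five, Fin.sum_univ_six, Matrix.cons_val_zero, Matrix.cons_val_one, Matrix.cons_val_two, Matrix.cons_val_three, Matrix.cons_val_four, cons_val_five, Matrix.cons_val_succ, Matrix.vecHead, Matrix.vecTail, Function.comp_apply, one_mul]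
  have o : ∫ v in B, (v 0) * (v 1)^2 = 0 := by
    apply odd_vanish _ neg0; intro v; simp [neg0] <;> ring
  rw [o, M020, C220]; ring

lemma Ag2 : ∫ v in B, ((1 + v 0) * v 2)^2 = 32*π/105 := by
  have hrw : (fun v : E3 => ((1 + v 0) * v 2)^2)
      = fun v => ∑ i, (![1,2,1] : Fin 3 → ℝ) i *
        (![fun v : E3 => v 2^2, fun v => v 0 * v 2^2, fun v => v 0^2 * v 2^2] i v) := by
    funext v; simp [Fin.sum_univ_three, Matrix.vecHead, Matrix.vecTail]; ring
  rw [hrw, int_sum _ _ (by intro i; fin_cases i <;> simp [Matrix.vecHead, Matrix.vecTail] <;> fun_prop)]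
  simp only [Fin.sum_univ_three, Fin.sum_univ_five, Fin.sum_univ_six, Matrix.cons_val_zero, Matrix.cons_val_one, Matrix.cons_val_two, Matrix.cons_val_three, Matrix.cons_val_four, cons_val_five, Matrix.cons_val_succ, Matrix.vecHead, Matrix.vecTail, Function.comp_apply, one_mul]
  have o : ∫ v in B, (v 0) * (v 2)^2 = 0 := by
    apply odd_vanish _ neg0; intro v; simp [neg0] <;> ring
  rw [o, M002, C202]; ring

lemma I1 (a b c : ℝ) :
    (∫ v in Metric.ball (0 : EuclideanSpace ℝ (Fin 3)) 1,
      (a * ((1 + v 0) * v 1) + b * ((1 + v 0) * v 2) + c) ^ 2 * ((1 + v 0) * v 1))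
    = 64*π/105 * (a*c) := by
  have hrw : (fun v : E3 =>
      (a * ((1 + v 0) * v 1) + b * ((1 + v 0) * v 2) + c) ^ 2 * ((1 + v 0) * v 1))
      = fun v => ∑ i, (![a^2, b^2, c^2, 2*a*b, 2*a*c, 2*b*c] : Fin 6 → ℝ) i *
        (![fun v : E3 => ((1 + v 0) * v 1)^3,
           fun v => ((1 + v 0) * v 2)^2 * ((1 + v 0) * v 1),
           fun v => (1 + v 0) * v 1,
           fun v => ((1 + v 0) * v 1)^2 * ((1 + v 0) * v 2),
           fun v => ((1 + v 0) * v 1)^2,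
           fun v => ((1 + v 0) * v 1) * ((1 + v 0) * v 2)] i v) := by
    funext v; simp [Fin.sum_univ_six, Matrix.vecHead, Matrix.vecTail]; ring
  rw [show (∫ v in Metric.ball (0 : EuclideanSpace ℝ (Fin 3)) 1,
      (a * ((1 + v 0) * v 1) + b * ((1 + v 0) * v 2) + c) ^ 2 * ((1 + v 0) * v 1))
      = ∫ v in B, (a * ((1 + v 0) * v 1) + b * ((1 + v 0) * v 2) + c) ^ 2 * ((1 + v 0) * v 1)
      from rfl]
  rw [hrw, int_sum _ _ (by intro i; fin_cases i <;> simp [Matrix.vecHead, Matrix.vecTail] <;> fun_prop)]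
  simp only [Fin.sum_univ_three, Fin.sum_univ_five, Fin.sum_univ_six, Matrix.cons_val_zero, Matrix.cons_val_one, Matrix.cons_val_two, Matrix.cons_val_three, Matrix.cons_val_four, cons_val_five, Matrix.cons_val_succ, Matrix.vecHead, Matrix.vecTail, Function.comp_apply, one_mul]
  have z1 : ∫ v in B, ((1 + v 0) * v 1)^3 = 0 := by
    apply odd_vanish _ neg1; intro v; simp [neg1] <;> ring
  have z2 : ∫ v in B, ((1 + v 0) * v 2)^2 * ((1 + v 0) * v 1) = 0 := by
    apply odd_vanish _ neg1; intro v; simp [neg1] <;> ring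
  have z3 : ∫ v in B, (1 + v 0) * v 1 = 0 := by
    apply odd_vanish _ neg1; intro v; simp [neg1] <;> ring
  have z4 : ∫ v in B, ((1 + v 0) * v 1)^2 * ((1 + v 0) * v 2) = 0 := by
    apply odd_vanish _ neg2; intro v; simp [neg2] <;> ring
  have z6 : ∫ v in B, ((1 + v 0) * v 1) * ((1 + v 0) * v 2) = 0 := by
    apply odd_vanish _ neg1; intro v; simp [neg1] <;> ring
  rw [z1, z2, z3, z4, z6, Af2]; ring

lemma I2 (a b c : ℝ) :
    (∫ v in Metric.ball (0 : EuclideanSpace ℝ (Fin 3)) 1,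
      (a * ((1 + v 0) * v 1) + b * ((1 + v 0) * v 2) + c) ^ 2 * ((1 + v 0) * v 2))
    = 64*π/105 * (b*c) := by
  have hrw : (fun v : E3 =>
      (a * ((1 + v 0) * v 1) + b * ((1 + v 0) * v 2) + c) ^ 2 * ((1 + v 0) * v 2))
      = fun v => ∑ i, (![a^2, b^2, c^2, 2*a*b, 2*a*c, 2*b*c] : Fin 6 → ℝ) i *
        (![fun v : E3 => ((1 + v 0) * v 1)^2 * ((1 + v 0) * v 2),
           fun v => ((1 + v 0) * v 2)^3,
           fun v => (1 + v 0) * v 2,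
           fun v => ((1 + v 0) * v 1) * ((1 + v 0) * v 2)^2,
           fun v => ((1 + v 0) * v 1) * ((1 + v 0) * v 2),
           fun v => ((1 + v 0) * v 2)^2] i v) := by
    funext v; simp [Fin.sum_univ_six, Matrix.vecHead, Matrix.vecTail]; ring
  rw [show (∫ v in Metric.ball (0 : EuclideanSpace ℝ (Fin 3)) 1,
      (a * ((1 + v 0) * v 1) + b * ((1 + v 0) * v 2) + c) ^ 2 * ((1 + v 0) * v 2))
      = ∫ v in B, (a * ((1 + v 0) * v 1) + b * ((1 + v 0) * v 2) + c) ^ 2 * ((1 + v 0) * v 2)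
      from rfl]
  rw [hrw, int_sum _ _ (by intro i; fin_cases i <;> simp [Matrix.vecHead, Matrix.vecTail] <;> fun_prop)]
  simp only [Fin.sum_univ_three, Fin.sum_univ_five, Fin.sum_univ_six, Matrix.cons_val_zero, Matrix.cons_val_one, Matrix.cons_val_two, Matrix.cons_val_three, Matrix.cons_val_four, cons_val_five, Matrix.cons_val_succ, Matrix.vecHead, Matrix.vecTail, Function.comp_apply, one_mul]
  have z1 : ∫ v in B, ((1 + v 0) * v 1)^2 * ((1 + v 0) * v 2) = 0 := by
    apply odd_vanish _ neg2; intro v; simp [neg2] <;> ring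
  have z2 : ∫ v in B, ((1 + v 0) * v 2)^3 = 0 := by
    apply odd_vanish _ neg2; intro v; simp [neg2] <;> ring
  have z3 : ∫ v in B, (1 + v 0) * v 2 = 0 := by
    apply odd_vanish _ neg2; intro v; simp [neg2] <;> ring
  have z4 : ∫ v in B, ((1 + v 0) * v 1) * ((1 + v 0) * v 2)^2 = 0 := by
    apply odd_vanish _ neg1; intro v; simp [neg1] <;> ring
  have z5 : ∫ v in B, ((1 + v 0) * v 1) * ((1 + v 0) * v 2) = 0 := by
    apply odd_vanish _ neg1; intro v; simp [neg1] <;> ring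
  rw [z1, z2, z3, z4, z5, Ag2]; ring

end ISRed
end

open MeasureTheory Real

/-- (D.13): with `φ(v) = (a f(v) + b g(v) + c)²`, `f(v) = (1+v₂)v₃`,
`g(v) = (1+v₂)v₄` on the open unit ball `B ⊂ ℝ³`, the integral system
`⟨φ,f⟩ = h₁, ⟨φ,g⟩ = h₂` holds iff `ac = 105h₁/(64π)` and `bc = 105h₂/(64π)`;
coordinates `v 0, v 1, v 2` are `v₂, v₃, v₄`. -/
theorem integral_system_reduction (a b c h₁ h₂ : ℝ) :
    ((∫ v in Metric.ball (0 : EuclideanSpace ℝ (Fin 3)) 1,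
        (a * ((1 + v 0) * v 1) + b * ((1 + v 0) * v 2) + c) ^ 2 * ((1 + v 0) * v 1))
          = h₁ ∧
     (∫ v in Metric.ball (0 : EuclideanSpace ℝ (Fin 3)) 1,
        (a * ((1 + v 0) * v 1) + b * ((1 + v 0) * v 2) + c) ^ 2 * ((1 + v 0) * v 2))
          = h₂) ↔
    (a * c = 105 * h₁ / (64 * π) ∧ b * c = 105 * h₂ / (64 * π)) := by
  rw [ISRed.I1 a b c, ISRed.I2 a b c]
  have hπ : (64:ℝ) * π ≠ 0 := by positivity
  have key : ∀ x y : ℝ, (64*π/105 * x = y) ↔ (x = 105*y/(64*π)) := by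
    intro x y
    rw [eq_div_iff hπ]
    constructor <;> intro h <;> linarith
  exact and_congr (key _ _) (key _ _)
end
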